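/- Let m, k with k | m, gcd(2^m - 1, 2^k + 1) = 1, and let d be the inverse of e = 2^m - 2^k - 2 modulo 2^m - 1. For v ∈ F_{2^m} nonzero, the set {x ∈ F_{2^m}* : v·x^(2^k+1) ∈ F_{2^k}*} equals {v^d · z : z ∈ F_{2^k}*} — more precisely, with μ = v^d (so μ^(2^k+1) = v^(-1)), one has v·x^(2^k+1) ∈ F_{2^k}* if and only if x ∈ μ·F_{2^k}*. -/

import Mathlib

/-- For nonzero `v ∈ F_{2^m}` and `μ = v^d` (`d` the inverse of `e = 2^m - 2^k - 2`
modulo `2^m - 1`), one has `v·x^(2^k+1) ∈ F_{2^k}^*` iff `x ∈ μ·F_{2^k}^*`. -/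
theorem stmt_9 (m k : ℕ) (hm : 0 < m) (hkpos : 0 < k) (hk : k ∣ m) (hkm : k < m)
    (hgcd : Nat.gcd (2 ^ m - 1) (2 ^ k + 1) = 1)
    (e d : ℕ) (he : e = 2 ^ m - 2 ^ k - 2) (hd : (e * d) % (2 ^ m - 1) = 1)
    (F : Type*) [Field F] [Fintype F] (hF : Fintype.card F = 2 ^ m)
    (v : F) (hv : v ≠ 0) (μ : F) (hμ : μ = v ^ d) :
    μ ^ (2 ^ k + 1) = v⁻¹ ∧
    ∀ x : F, x ≠ 0 →
      ((v * x ^ (2 ^ k + 1)) ^ (2 ^ k) = v * x ^ (2 ^ k + 1) ∧ v * x ^ (2 ^ k + 1) ≠ 0 ↔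
        ∃ z : F, z ^ (2 ^ k) = z ∧ z ≠ 0 ∧ x = μ * z) := by
  have hm2 : 2 ≤ m := by omega
  set N := 2 ^ m - 1 with hN
  set n := 2 ^ k + 1 with hn
  -- basic numeric facts
  have h2k : 2 ≤ 2 ^ k := by
    calc 2 = 2 ^ 1 := rfl
    _ ≤ 2 ^ k := Nat.pow_le_pow_right (by norm_num) hkpos
  have h2km : 2 ^ (k + 1) ≤ 2 ^ m := Nat.pow_le_pow_right (by norm_num) hkm
  have h2k1 : 2 ^ (k + 1) = 2 * 2 ^ k := by ring
  have hN1 : 1 < N := by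
    have h4 : 4 ≤ 2 ^ m := by
      calc 4 = 2 ^ 2 := rfl
      _ ≤ 2 ^ m := Nat.pow_le_pow_right (by norm_num) hm2
    omega
  have hcard : Fintype.card F - 1 = N := by omega
  have hpowN : ∀ a : F, a ≠ 0 → a ^ N = 1 := by
    intro a ha
    rw [← hcard]; exact FiniteField.pow_card_sub_one_eq_one a ha
  have hek : n + e = N := by omega
  -- N divides n*d + 1
  have hdvd : N ∣ n * d + 1 := by
    obtain ⟨t, ht⟩ : ∃ t, e * d = N * t + 1 := ⟨e * d / N, by
      have := Nat.div_add_mod (e * d) N; omega⟩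
    have hekZ : (n : ℤ) + e = N := by exact_mod_cast hek
    have htZ : (e : ℤ) * d = N * t + 1 := by exact_mod_cast ht
    have hZ : ((n : ℤ) * d + 1) = N * (d - t) := by linear_combination (d : ℤ) * hekZ - htZ
    have : (N : ℤ) ∣ ((n : ℤ) * d + 1) := ⟨(d : ℤ) - t, hZ⟩
    exact_mod_cast this
  -- part 1
  have hμv : v * μ ^ n = 1 := by
    obtain ⟨c, hc⟩ := hdvd
    have : v ^ (n * d + 1) = 1 := by rw [hc, pow_mul, hpowN v hv, one_pow]
    calc v * μ ^ n = v ^ (n * d + 1) := by rw [hμ, ← pow_mul, pow_succ, mul_comm d n, mul_comm]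
    _ = 1 := this
  have hμinv : μ ^ n = v⁻¹ := by
    field_simp
    linear_combination hμv
  have hμ0 : μ ≠ 0 := by rw [hμ]; exact pow_ne_zero _ hv
  -- injectivity of the n-th power map on nonzero elements
  have hinj : ∀ a b : F, a ≠ 0 → b ≠ 0 → a ^ n = b ^ n → a = b := by
    have hcop : Nat.Coprime n N := Nat.coprime_comm.mp hgcd
    obtain ⟨c, -, hc⟩ := Nat.exists_mul_mod_eq_one_of_coprime hcop hN1
    have key : ∀ u : F, u ≠ 0 → (u ^ n) ^ c = u := by
      intro u hu
      rw [← pow_mul]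
      have hrep : n * c = N * (n * c / N) + 1 := by
        have := Nat.div_add_mod (n * c) N; omega
      rw [hrep, pow_add, pow_mul, hpowN u hu, one_pow, pow_one, one_mul]
    intro a b ha hb hab
    rw [← key a ha, ← key b hb, hab]
  refine ⟨hμinv, ?_⟩
  intro x hx
  constructor
  · rintro ⟨hw1, hw2⟩
    set z := μ⁻¹ * x with hzdef
    have hz0 : z ≠ 0 := mul_ne_zero (inv_ne_zero hμ0) hx
    have hzn : z ^ n = v * x ^ n := by
      rw [hzdef, mul_pow, inv_pow, hμinv, inv_inv]
    refine ⟨z, ?_, hz0, by rw [hzdef]; field_simp⟩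
    apply hinj _ _ (pow_ne_zero _ hz0) hz0
    calc (z ^ 2 ^ k) ^ n = (z ^ n) ^ 2 ^ k := by rw [← pow_mul, ← pow_mul, mul_comm]
    _ = (v * x ^ n) ^ 2 ^ k := by rw [hzn]
    _ = v * x ^ n := hw1
    _ = z ^ n := hzn.symm
  · rintro ⟨z, hz1, hz0, rfl⟩
    have hw : v * (μ * z) ^ n = z ^ 2 := by
      rw [mul_pow, hμinv, ← mul_assoc, mul_inv_cancel₀ hv, one_mul, hn, pow_succ, hz1, sq]
    constructor
    · rw [hw, ← pow_mul, mul_comm, pow_mul, hz1]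
    · rw [hw]; exact pow_ne_zero _ hz0
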